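/- For every real number x and every positive real p, it holds that 0 ≤ (1/p)·ln(1 + e^{px} + e^{-px}) − |x| ≤ (1/p)·ln(3). -/

import Mathlib

theorem stmt_0 (x p : ℝ) (hp : 0 < p) :
    0 ≤ (1 / p) * Real.log (1 + Real.exp (p * x) + Real.exp (-(p * x))) - |x| ∧
      (1 / p) * Real.log (1 + Real.exp (p * x) + Real.exp (-(p * x))) - |x| ≤
        (1 / p) * Real.log 3 := by
  set S : ℝ := 1 + Real.exp (p * x) + Real.exp (-(p * x)) with hS
  have hSpos : 0 < S := by positivity
  have hle : Real.exp (p * |x|) ≤ S := by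
    rcases abs_cases x with ⟨h, _⟩ | ⟨h, _⟩
    · rw [h]
      nlinarith [Real.exp_pos (p * x), Real.exp_pos (-(p * x))]
    · rw [h]
      have : p * -x = -(p * x) := by ring
      rw [this]
      nlinarith [Real.exp_pos (p * x), Real.exp_pos (-(p * x))]
  have hub : S ≤ 3 * Real.exp (p * |x|) := by
    have h1 : (1 : ℝ) ≤ Real.exp (p * |x|) := by
      rw [Real.one_le_exp_iff]; positivity
    have h2 : Real.exp (p * x) ≤ Real.exp (p * |x|) := by
      apply Real.exp_le_exp.mpr
      nlinarith [le_abs_self x]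
    have h3 : Real.exp (-(p * x)) ≤ Real.exp (p * |x|) := by
      apply Real.exp_le_exp.mpr
      nlinarith [neg_abs_le x]
    linarith
  have hlog1 : p * |x| ≤ Real.log S := (Real.le_log_iff_exp_le hSpos).mpr hle
  have hlog2 : Real.log S ≤ p * |x| + Real.log 3 := by
    have := Real.log_le_log hSpos hub
    rwa [Real.log_mul (by norm_num) (Real.exp_ne_zero _), Real.log_exp, add_comm] at this
  constructor
  · rw [sub_nonneg]
    rw [← mul_le_mul_iff_right₀ hp]
    calc p * |x| ≤ Real.log S := hlog1
      _ = p * ((1/p) * Real.log S) := by field_simp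
  · have : (1/p) * Real.log S ≤ (1/p) * (p * |x| + Real.log 3) := by
      apply mul_le_mul_of_nonneg_left hlog2 (by positivity)
    have h' : (1/p) * (p * |x| + Real.log 3) = |x| + (1/p) * Real.log 3 := by
      field_simp
    linarith
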